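/- Let m, n, d be natural numbers with 0 < d < min(m,n) and c = m+n-2d-1. Then the d×d matrix with entries C(c, m-i-j) for 1 ≤ i,j ≤ d (with C(c,k)=0 for k<0 or k>c) is invertible over ℚ; in particular its determinant (-1)^(d(d-1)/2)·∏_{i=1}^{d}((i-1)!(c+i-1)!)/((m-i-1)!(n-i)!) is nonzero. -/

import Mathlib

open Finset Polynomial

noncomputable def colP (d : ℕ) (c μ : ℚ) (j : ℕ) : Polynomial ℚ :=
  (∏ s ∈ Finset.Ico (j+1) d, (Polynomial.C (μ + s) - Polynomial.X)) *
  (∏ s ∈ Finset.range j, (Polynomial.X + Polynomial.C (c - μ - s)))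

theorem colP_natDegree_le (d : ℕ) (c μ : ℚ) (j : ℕ) :
    (colP d c μ j).natDegree ≤ (d - (j+1)) + j := by
  unfold colP
  refine le_trans (Polynomial.natDegree_mul_le) (add_le_add ?_ ?_)
  · refine le_trans (Polynomial.natDegree_prod_le _ _) ?_
    calc ∑ s ∈ Finset.Ico (j+1) d, (Polynomial.C (μ + s) - Polynomial.X).natDegree
        ≤ ∑ s ∈ Finset.Ico (j+1) d, 1 := by
          refine Finset.sum_le_sum fun s _ => ?_
          refine le_trans (Polynomial.natDegree_sub_le _ _) ?_
          simp
      _ = d - (j+1) := by simp [Nat.card_Ico]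
  · refine le_trans (Polynomial.natDegree_prod_le _ _) ?_
    calc ∑ s ∈ Finset.range j, (Polynomial.X + Polynomial.C (c - μ - s)).natDegree
        ≤ ∑ s ∈ Finset.range j, 1 := by
          refine Finset.sum_le_sum fun s _ => ?_
          exact le_of_eq (Polynomial.natDegree_X_add_C _)
      _ = j := by simp

theorem colP_last (d : ℕ) (c μ : ℚ) :
    colP (d+1) c μ d = ∏ s ∈ Finset.range d, (Polynomial.X + Polynomial.C (c - μ - s)) := by
  unfold colP
  rw [show d + 1 = d + 1 from rfl]
  rw [Finset.Ico_self, Finset.prod_empty, one_mul]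

theorem colP_last_monic (d : ℕ) (c μ : ℚ) : (colP (d+1) c μ d).Monic := by
  rw [colP_last]
  exact Polynomial.monic_prod_of_monic _ _ fun s _ => Polynomial.monic_X_add_C _

theorem colP_last_natDegree (d : ℕ) (c μ : ℚ) : (colP (d+1) c μ d).natDegree = d := by
  rw [colP_last, Polynomial.natDegree_prod _ _ (fun s _ => (Polynomial.monic_X_add_C _).ne_zero),
    Finset.sum_congr rfl (fun s _ => Polynomial.natDegree_X_add_C _)]
  simp

theorem colP_add (d : ℕ) (c μ : ℚ) (j : ℕ) (hj : j < d) :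
    colP (d+1) c μ j + colP (d+1) c μ (j+1)
      = Polynomial.C (c+1) * colP d (c+1) (μ+1) j := by
  unfold colP
  rw [Finset.prod_eq_prod_Ico_succ_bot (by omega : j+1 < d+1), Finset.prod_range_succ]
  have hre : ∏ s ∈ Finset.Ico (j+1+1) (d+1), (Polynomial.C (μ + (s:ℚ)) - Polynomial.X)
      = ∏ s ∈ Finset.Ico (j+1) d, (Polynomial.C (μ + 1 + (s:ℚ)) - Polynomial.X) := by
    rw [Finset.prod_Ico_eq_prod_range, Finset.prod_Ico_eq_prod_range]
    rw [show d + 1 - (j+1+1) = d - (j+1) from by omega]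
    refine Finset.prod_congr rfl fun s _ => ?_
    congr 1
    push_cast
    ring
  have hre2 : ∏ s ∈ Finset.range j, (Polynomial.X + Polynomial.C (c + 1 - (μ+1) - (s:ℚ)))
      = ∏ s ∈ Finset.range j, (Polynomial.X + Polynomial.C (c - μ - (s:ℚ))) := by
    refine Finset.prod_congr rfl fun s _ => ?_
    congr 1
    ring
  rw [hre, hre2]
  have hC : Polynomial.C (μ + ((j:ℚ)+1)) + Polynomial.C (c - μ - (j:ℚ)) = Polynomial.C (c+1) := by
    rw [← Polynomial.C_add]
    congr 1
    ring
  push_cast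
  linear_combination (∏ s ∈ Finset.Ico (j+1) d, (Polynomial.C (μ + 1 + (s:ℚ)) - Polynomial.X)) *
    (∏ s ∈ Finset.range j, (Polynomial.X + Polynomial.C (c - μ - (s:ℚ)))) * hC

theorem altsum (d : ℕ) (p : Polynomial ℚ) (hp : p.natDegree ≤ d) :
    ∑ t ∈ range (d+1), (-1:ℚ)^t * (d.choose t) * p.eval (t:ℚ)
      = (-1)^d * (d.factorial : ℚ) * p.coeff d := by
  induction d generalizing p with
  | zero =>
    rw [Polynomial.eq_C_of_natDegree_le_zero hp]
    simp
  | succ d ih =>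
    set q : Polynomial ℚ := Polynomial.taylor 1 p - p with hq
    have hqN : ∀ N, d < N → q.coeff N = 0 := by
      intro N hN
      rcases eq_or_lt_of_le (Nat.succ_le_of_lt hN) with h | h
      · have h1 : (Polynomial.taylor 1 p).coeff N = p.coeff N := by
          rw [Polynomial.taylor_coeff]
          have hd0 : (Polynomial.hasseDeriv N p).natDegree ≤ 0 := by
            refine le_trans (Polynomial.natDegree_hasseDeriv_le p N) ?_
            omega
          rw [Polynomial.eq_C_of_natDegree_le_zero hd0]
          simp [Polynomial.hasseDeriv_coeff, ← h]
        simp [hq, h1]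
      · have h2 : p.natDegree < N := by omega
        simp [hq, Polynomial.coeff_eq_zero_of_natDegree_lt h2,
          Polynomial.coeff_eq_zero_of_natDegree_lt
            (lt_of_le_of_lt (le_of_eq (Polynomial.natDegree_taylor p 1)) h2)]
    have hqdeg : q.natDegree ≤ d := Polynomial.natDegree_le_iff_coeff_eq_zero.mpr hqN
    have hqd : q.coeff d = (d+1 : ℚ) * p.coeff (d+1) := by
      rw [hq, Polynomial.coeff_sub, Polynomial.taylor_coeff]
      have hd1 : (Polynomial.hasseDeriv d p).natDegree ≤ 1 := by
        refine le_trans (Polynomial.natDegree_hasseDeriv_le p d) ?_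
        omega
      rw [Polynomial.eq_X_add_C_of_natDegree_le_one hd1]
      simp [Polynomial.hasseDeriv_coeff]
      rw [add_comm 1 d, Nat.choose_succ_self_right]
      push_cast
      ring
    have hqe : ∀ t : ℕ, q.eval (t:ℚ) = p.eval ((t:ℚ)+1) - p.eval (t:ℚ) := by
      intro t
      simp [hq, Polynomial.taylor_eval]
    set S0 : ℚ := ∑ t ∈ range (d+1), (-1:ℚ)^t * (d.choose t) * p.eval (t:ℚ) with hS0
    set S1 : ℚ := ∑ t ∈ range (d+1), (-1:ℚ)^t * (d.choose t) * p.eval ((t:ℚ)+1) with hS1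
    set S1' : ℚ := ∑ t ∈ range (d+1), (-1:ℚ)^t * (d.choose (t+1)) * p.eval ((t:ℚ)+1) with hS1'
    have e1 : ∑ t ∈ range (d+2), (-1:ℚ)^t * ((d+1).choose t) * p.eval (t:ℚ)
        = p.eval 0 + ∑ t ∈ range (d+1), (-1:ℚ)^(t+1) * ((d+1).choose (t+1)) * p.eval ((t:ℚ)+1) := by
      rw [Finset.sum_range_succ' (fun t => (-1:ℚ)^t * ((d+1).choose t) * p.eval (t:ℚ))]
      rw [add_comm]
      congr 1
      · simp
      · apply Finset.sum_congr rfl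
        intro t _
        push_cast
        ring_nf
    have e2 : ∑ t ∈ range (d+1), (-1:ℚ)^(t+1) * ((d+1).choose (t+1)) * p.eval ((t:ℚ)+1)
        = -S1 - S1' := by
      have : ∀ t ∈ range (d+1), (-1:ℚ)^(t+1) * ((d+1).choose (t+1)) * p.eval ((t:ℚ)+1)
          = -((-1:ℚ)^t * (d.choose t) * p.eval ((t:ℚ)+1))
            - ((-1:ℚ)^t * (d.choose (t+1)) * p.eval ((t:ℚ)+1)) := by
        intro t _
        rw [Nat.choose_succ_succ]
        push_cast
        ring
      rw [Finset.sum_congr rfl this, Finset.sum_sub_distrib, Finset.sum_neg_distrib]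
    have e3 : S0 = p.eval 0 - S1' := by
      have pad : S0 = ∑ t ∈ range (d+2), (-1:ℚ)^t * (d.choose t) * p.eval (t:ℚ) := by
        rw [Finset.sum_range_succ, Nat.choose_succ_self]
        simp
        exact hS0
      rw [pad, Finset.sum_range_succ' (fun t => (-1:ℚ)^t * (d.choose t) * p.eval (t:ℚ))]
      have : ∀ t ∈ range (d+1), (-1:ℚ)^(t+1) * (d.choose (t+1)) * p.eval (((t+1:ℕ)):ℚ)
          = -((-1:ℚ)^t * (d.choose (t+1)) * p.eval ((t:ℚ)+1)) := by
        intro t _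
        push_cast
        ring
      rw [Finset.sum_congr rfl this, Finset.sum_neg_distrib]
      simp [sub_eq_add_neg, add_comm]
      exact hS1'.symm
    have e4 : -∑ t ∈ range (d+1), (-1:ℚ)^t * (d.choose t) * q.eval (t:ℚ) = S0 - S1 := by
      have : ∀ t ∈ range (d+1), (-1:ℚ)^t * (d.choose t) * q.eval (t:ℚ)
          = ((-1:ℚ)^t * (d.choose t) * p.eval ((t:ℚ)+1))
            - ((-1:ℚ)^t * (d.choose t) * p.eval (t:ℚ)) := by
        intro t _
        rw [hqe t]
        ring
      rw [Finset.sum_congr rfl this, Finset.sum_sub_distrib]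
      rw [hS0, hS1]
      ring
    have key : ∑ t ∈ range (d+2), (-1:ℚ)^t * ((d+1).choose t) * p.eval (t:ℚ)
        = -∑ t ∈ range (d+1), (-1:ℚ)^t * (d.choose t) * q.eval (t:ℚ) := by
      rw [e1, e2, e4]
      rw [e3]
      ring
    rw [key, ih q hqdeg, hqd, Nat.factorial_succ]
    push_cast
    ring
open Equiv in
theorem revPerm_eq (n : ℕ) :
    (Fin.revPerm : Perm (Fin (n+1))) =
      Equiv.Perm.decomposeFin.symm (0, Fin.revPerm) * finRotate (n+1) := by
  ext i
  induction i using Fin.lastCases with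
  | last =>
    simp [Fin.rev_last, finRotate_last]
  | cast j =>
    have h1 : finRotate (n+1) (Fin.castSucc j) = j.succ := by
      rw [finRotate_succ_apply, Fin.coeSucc_eq_succ]
    simp only [Equiv.Perm.coe_mul, Function.comp_apply, h1, Fin.revPerm_apply,
      Equiv.Perm.decomposeFin_symm_apply_succ, Equiv.swap_self, Fin.rev_castSucc]
    simp
    
open Equiv in
theorem sign_revPerm (n : ℕ) :
    Equiv.Perm.sign (Fin.revPerm : Perm (Fin n)) = (-1) ^ (n * (n-1) / 2) := by
  induction n with
  | zero => decide
  | succ n ih =>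
    rw [show (Fin.revPerm : Perm (Fin (n+1))) =
      Equiv.Perm.decomposeFin.symm (0, Fin.revPerm) * finRotate (n+1) from revPerm_eq n,
      map_mul, Equiv.Perm.decomposeFin.symm_sign, sign_finRotate, ih]
    have : (n+1) * (n+1-1)/2 = n * (n-1)/2 + n := by
      rcases n with _ | n
      · rfl
      · have : (n+2) * (n+1) = (n+1)*n + 2*(n+1) := by ring
        rw [Nat.add_sub_cancel, Nat.add_sub_cancel, this, Nat.add_mul_div_left _ _ (by norm_num)]
    rw [this, pow_add]
    simp [mul_comm]

theorem detE (d : ℕ) (c μ : ℚ) :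
    (Matrix.of fun i j : Fin d => (colP d c μ (j:ℕ)).eval ((i:ℕ) : ℚ)).det
      = (∏ k ∈ range d, (k.factorial : ℚ)) * ∏ k ∈ range d, ((c + k + 1)^(d - 1 - k)) := by
  induction d generalizing c μ with
  | zero => simp [Matrix.det_fin_zero]
  | succ d ih =>
    set A : Matrix (Fin (d+1)) (Fin (d+1)) ℚ :=
      Matrix.of fun i j : Fin (d+1) => (colP (d+1) c μ (j:ℕ)).eval ((i:ℕ) : ℚ) with hA
    set U : Matrix (Fin (d+1)) (Fin (d+1)) ℚ :=
      Matrix.of fun t j : Fin (d+1) =>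
        if t = j then 1 else if (t:ℕ) = (j:ℕ)+1 then 1 else 0 with hU
    set L : Matrix (Fin (d+1)) (Fin (d+1)) ℚ :=
      Matrix.of fun i t : Fin (d+1) =>
        if i = Fin.last d then (-1:ℚ)^(t:ℕ) * ((d.choose (t:ℕ)) : ℚ)
        else if i = t then 1 else 0 with hL
    have hUdet : U.det = 1 := by
      rw [Matrix.det_of_lowerTriangular U (by
        intro i j hij
        have hij' : (i:ℕ) < (j:ℕ) := OrderDual.toDual_lt_toDual.mp hij
        rw [hU]
        simp only [Matrix.of_apply]
        rw [if_neg (by intro h; subst h; omega), if_neg (by omega)])]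
      refine Finset.prod_eq_one fun i _ => ?_
      simp [hU]
    have hLdet : L.det = (-1:ℚ)^d := by
      rw [Matrix.det_of_lowerTriangular L (by
        intro i t hit
        have hit' : (i:ℕ) < (t:ℕ) := OrderDual.toDual_lt_toDual.mp hit
        rw [hL]
        simp only [Matrix.of_apply]
        have hi : i ≠ Fin.last d := by
          intro h
          subst h
          exact absurd (t.le_last) (not_le.mpr hit')
        rw [if_neg hi, if_neg (by intro h; subst h; omega)])]
      rw [Fin.prod_univ_castSucc]
      have h1 : ∀ i : Fin d, L (Fin.castSucc i) (Fin.castSucc i) = 1 := by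
        intro i
        rw [hL]
        simp only [Matrix.of_apply]
        rw [if_neg (Fin.castSucc_lt_last i).ne]
        simp
      rw [Finset.prod_congr rfl (fun i _ => h1 i), Finset.prod_const_one, one_mul, hL]
      simp
    have hAU : ∀ (i j : Fin (d+1)), (A * U) i j
        = A i j + (if h : (j:ℕ) < d then A i ⟨(j:ℕ)+1, by omega⟩ else 0) := by
      intro i j
      rw [Matrix.mul_apply]
      have key : ∀ t : Fin (d+1), A i t * U t j
          = (if t = j then A i t else 0) + (if (t:ℕ) = (j:ℕ)+1 then A i t else 0) := by
        intro t
        rw [hU]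
        simp only [Matrix.of_apply]
        by_cases h1 : t = j
        · rw [if_pos h1, if_pos h1, if_neg (by subst h1; omega)]
          ring
        · rw [if_neg h1, if_neg h1]
          by_cases h2 : (t:ℕ) = (j:ℕ)+1
          · rw [if_pos h2, if_pos h2]
            ring
          · rw [if_neg h2, if_neg h2]
            ring
      rw [Finset.sum_congr rfl (fun t _ => key t), Finset.sum_add_distrib,
        Finset.sum_ite_eq' Finset.univ j (A i), if_pos (Finset.mem_univ _)]
      congr 1
      by_cases hj : (j:ℕ) < d
      · rw [dif_pos hj]
        have hiff : ∀ t : Fin (d+1), ((t:ℕ) = (j:ℕ)+1) ↔ (t = (⟨(j:ℕ)+1, by omega⟩ : Fin (d+1))) := by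
          intro t
          rw [Fin.ext_iff]
        simp only [hiff]
        rw [Finset.sum_ite_eq' Finset.univ _ (A i), if_pos (Finset.mem_univ _)]
      · rw [dif_neg hj]
        refine Finset.sum_eq_zero fun t _ => ?_
        rw [if_neg (by have := t.isLt; have := j.isLt; omega)]
    have hcol : ∀ (t j : Fin (d+1)), (j:ℕ) < d →
        (A * U) t j = (c+1) * (colP d (c+1) (μ+1) (j:ℕ)).eval ((t:ℕ) : ℚ) := by
      intro t j hj
      rw [hAU, dif_pos hj, hA]
      simp only [Matrix.of_apply]
      rw [← Polynomial.eval_add]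
      have : colP (d+1) c μ (j:ℕ) + colP (d+1) c μ ((⟨(j:ℕ)+1, by omega⟩ : Fin (d+1)) : ℕ)
          = Polynomial.C (c+1) * colP d (c+1) (μ+1) (j:ℕ) := colP_add d c μ (j:ℕ) hj
      rw [this, Polynomial.eval_mul, Polynomial.eval_C]
    have hlastcol : ∀ t : Fin (d+1), (A * U) t (Fin.last d) = A t (Fin.last d) := by
      intro t
      rw [hAU, dif_neg (by simp), add_zero]
    have hBrow : ∀ (i j : Fin (d+1)), i ≠ Fin.last d → (L * (A * U)) i j = (A * U) i j := by
      intro i j hi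
      rw [Matrix.mul_apply]
      have key : ∀ t : Fin (d+1), L i t * (A * U) t j = if t = i then (A * U) t j else 0 := by
        intro t
        rw [hL]
        simp only [Matrix.of_apply]
        rw [if_neg hi]
        by_cases h : t = i
        · rw [if_pos h, if_pos (h ▸ rfl : i = t), one_mul]
        · rw [if_neg h, if_neg (fun hh => h hh.symm), zero_mul]
      rw [Finset.sum_congr rfl (fun t _ => key t),
        Finset.sum_ite_eq' Finset.univ i ((A*U) · j), if_pos (Finset.mem_univ _)]
    have hBlastrow : ∀ j : Fin (d+1), (L * (A * U)) (Fin.last d) j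
        = ∑ t : Fin (d+1), (-1:ℚ)^(t:ℕ) * ((d.choose (t:ℕ)):ℚ) * (A * U) t j := by
      intro j
      rw [Matrix.mul_apply]
      refine Finset.sum_congr rfl fun t _ => ?_
      rw [hL]
      simp
    have hBlast0 : ∀ j : Fin (d+1), (j:ℕ) < d → (L * (A * U)) (Fin.last d) j = 0 := by
      intro j hj
      rw [hBlastrow]
      have : ∀ t : Fin (d+1), (-1:ℚ)^(t:ℕ) * ((d.choose (t:ℕ)):ℚ) * (A * U) t j
          = (c+1) * ((-1:ℚ)^(t:ℕ) * ((d.choose (t:ℕ)):ℚ)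
              * (colP d (c+1) (μ+1) (j:ℕ)).eval ((t:ℕ) : ℚ)) := by
        intro t
        rw [hcol t j hj]
        ring
      rw [Finset.sum_congr rfl (fun t _ => this t), ← Finset.mul_sum]
      have hconv : ∑ t : Fin (d+1), ((-1:ℚ)^(t:ℕ) * ((d.choose (t:ℕ)):ℚ)
          * (colP d (c+1) (μ+1) (j:ℕ)).eval ((t:ℕ) : ℚ))
          = ∑ t ∈ range (d+1), ((-1:ℚ)^t * ((d.choose t):ℚ)
          * (colP d (c+1) (μ+1) (j:ℕ)).eval (t : ℚ)) :=
        Fin.sum_univ_eq_sum_range (fun t : ℕ => (-1:ℚ)^t * ((d.choose t):ℚ)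
          * (colP d (c+1) (μ+1) (j:ℕ)).eval (t : ℚ)) (d+1)
      rw [hconv, altsum d _ (by
        refine le_trans (colP_natDegree_le d (c+1) (μ+1) (j:ℕ)) ?_
        omega),
        Polynomial.coeff_eq_zero_of_natDegree_lt (by
          refine lt_of_le_of_lt (colP_natDegree_le d (c+1) (μ+1) (j:ℕ)) ?_
          omega)]
      ring
    have hBlastlast : (L * (A * U)) (Fin.last d) (Fin.last d) = (-1:ℚ)^d * (d.factorial : ℚ) := by
      rw [hBlastrow]
      have : ∀ t : Fin (d+1), (-1:ℚ)^(t:ℕ) * ((d.choose (t:ℕ)):ℚ) * (A * U) t (Fin.last d)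
          = (-1:ℚ)^(t:ℕ) * ((d.choose (t:ℕ)):ℚ)
              * (colP (d+1) c μ d).eval ((t:ℕ) : ℚ) := by
        intro t
        rw [hlastcol t, hA]
        simp only [Matrix.of_apply, Fin.val_last]
      rw [Finset.sum_congr rfl (fun t _ => this t)]
      have hconv : ∑ t : Fin (d+1), ((-1:ℚ)^(t:ℕ) * ((d.choose (t:ℕ)):ℚ)
          * (colP (d+1) c μ d).eval ((t:ℕ) : ℚ))
          = ∑ t ∈ range (d+1), ((-1:ℚ)^t * ((d.choose t):ℚ)
          * (colP (d+1) c μ d).eval (t : ℚ)) :=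
        Fin.sum_univ_eq_sum_range (fun t : ℕ => (-1:ℚ)^t * ((d.choose t):ℚ)
          * (colP (d+1) c μ d).eval (t : ℚ)) (d+1)
      rw [hconv, altsum d _ (le_of_eq (colP_last_natDegree d c μ))]
      have : (colP (d+1) c μ d).coeff d = 1 := by
        have hm := colP_last_monic d c μ
        have := hm.coeff_natDegree
        rwa [colP_last_natDegree d c μ] at this
      rw [this, mul_one]
    have hsub : ((L * (A * U)).submatrix (Fin.last d).succAbove (Fin.last d).succAbove)
        = Matrix.of fun i j : Fin d =>
            (c+1) * (colP d (c+1) (μ+1) (j:ℕ)).eval ((i:ℕ) : ℚ) := by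
      ext i j
      rw [Fin.succAbove_last]
      simp only [Matrix.submatrix_apply, Matrix.of_apply]
      rw [hBrow _ _ (Fin.castSucc_lt_last i).ne, hcol _ _ (by simpa using j.isLt)]
      simp
    have hdetsub : ((L * (A * U)).submatrix (Fin.last d).succAbove (Fin.last d).succAbove).det
        = (c+1)^d * ((∏ k ∈ range d, (k.factorial : ℚ))
            * ∏ k ∈ range d, ((c + 1 + k + 1)^(d - 1 - k))) := by
      rw [hsub]
      have : (Matrix.of fun i j : Fin d =>
          (c+1) * (colP d (c+1) (μ+1) (j:ℕ)).eval ((i:ℕ) : ℚ))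
          = Matrix.of fun i j : Fin d =>
            (fun _ : Fin d => (c+1)) i * (Matrix.of fun i j : Fin d =>
              (colP d (c+1) (μ+1) (j:ℕ)).eval ((i:ℕ) : ℚ)) i j := rfl
      rw [this, Matrix.det_mul_column, ih (c+1) (μ+1)]
      simp [Finset.prod_const]
    have hdetB : (L * (A * U)).det = (-1:ℚ)^d * (d.factorial : ℚ)
        * ((c+1)^d * ((∏ k ∈ range d, (k.factorial : ℚ))
            * ∏ k ∈ range d, ((c + 1 + k + 1)^(d - 1 - k)))) := by
      rw [Matrix.det_succ_row (L * (A * U)) (Fin.last d)]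
      rw [Finset.sum_eq_single (Fin.last d)]
      · rw [hBlastlast, hdetsub, Fin.val_last]
        have h2 : (-1:ℚ)^(d + d) = 1 := Even.neg_one_pow ⟨d, rfl⟩
        rw [h2, one_mul]
      · intro j _ hj
        have hjv : (j:ℕ) ≠ d := by simpa [Fin.ext_iff] using hj
        rw [hBlast0 j (by have := j.isLt; omega)]
        ring
      · intro h
        exact absurd (Finset.mem_univ _) h
    have hdetmul : (L * (A * U)).det = (-1:ℚ)^d * A.det := by
      rw [Matrix.det_mul, Matrix.det_mul, hLdet, hUdet, mul_one]
    have hdetA : A.det = (d.factorial : ℚ)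
        * ((c+1)^d * ((∏ k ∈ range d, (k.factorial : ℚ))
            * ∏ k ∈ range d, ((c + 1 + k + 1)^(d - 1 - k)))) := by
      have h1 : (-1:ℚ)^d ≠ 0 := pow_ne_zero _ (by norm_num)
      apply mul_left_cancel₀ h1
      rw [← hdetmul, hdetB]
      ring
    rw [hdetA]
    rw [Finset.prod_range_succ (fun k => ((k.factorial : ℚ))),
      Finset.prod_range_succ' (fun k => ((c + (k:ℚ) + 1)^(d + 1 - 1 - k)))]
    have hprodeq : ∏ k ∈ range d, ((c + ((k+1:ℕ):ℚ) + 1)^(d + 1 - 1 - (k+1)))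
        = ∏ k ∈ range d, ((c + 1 + (k:ℚ) + 1)^(d - 1 - k)) := by
      refine Finset.prod_congr rfl fun k _ => ?_
      have he : d + 1 - 1 - (k+1) = d - 1 - k := by omega
      rw [he]
      congr 1
      push_cast
      ring
    rw [hprodeq, show d + 1 - 1 - 0 = d from by omega, Nat.cast_zero, add_zero]
    ring

theorem fact_ratio (a k : ℕ) :
    (((a+k).factorial : ℚ)) = (a.factorial : ℚ) * ∏ s ∈ range k, ((a:ℚ) + 1 + s) := by
  induction k with
  | zero => simp
  | succ k ih =>
    rw [show a + (k+1) = (a+k)+1 from rfl, Nat.factorial_succ, Finset.prod_range_succ]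
    push_cast
    rw [ih]
    ring

theorem prod_tri (d : ℕ) (f : ℕ → ℚ) :
    ∏ i ∈ range d, ∏ s ∈ range i, f s = ∏ s ∈ range d, (f s)^(d-1-s) := by
  induction d with
  | zero => simp
  | succ d ih =>
    rw [Finset.prod_range_succ, ih, Finset.prod_range_succ (fun s => f s ^ (d+1-1-s)),
      show d+1-1-d = 0 from by omega, pow_zero, mul_one, ← Finset.prod_mul_distrib]
    refine Finset.prod_congr rfl fun s hs => ?_
    rw [Finset.mem_range] at hs
    rw [← pow_succ, show d+1-1-s = (d-1-s)+1 from by omega]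

theorem colP_eval (d : ℕ) (c μ : ℚ) (j : ℕ) (x : ℚ) :
    (colP d c μ j).eval x
      = (∏ s ∈ Finset.Ico (j+1) d, (μ + (s:ℚ) - x)) * ∏ s ∈ Finset.range j, (x + (c - μ - (s:ℚ))) := by
  simp [colP, Polynomial.eval_prod, sub_eq_add_neg]

/-- Binomial coefficient `C(c, k)` with integer lower index, zero when `k < 0`
(and automatically zero when `k > c`), as a rational number. -/
def binomQ (c : ℕ) (k : ℤ) : ℚ := if 0 ≤ k then (c.choose k.toNat : ℚ) else 0

section Main

variable (m n d : ℕ)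

theorem entry_identity (hd : 0 < d) (hdm : d < m) (hdn : d < n) (i j : Fin d) :
    (((m - (i:ℕ) - 2).factorial : ℚ) * ((n - d + (i:ℕ)).factorial : ℚ)
        / ((m + n - 2*d - 1).factorial : ℚ))
      * binomQ (m + n - 2*d - 1) (((m - d - 1 : ℕ) : ℤ) + (j:ℕ) - (i:ℕ))
    = (colP d ((m + n - 2*d - 1 : ℕ) : ℚ) ((m - d - 1 : ℕ) : ℚ) (j:ℕ)).eval (((i:ℕ):ℚ)) := by
  have hi := i.isLt
  have hj := j.isLt
  set c := m + n - 2*d - 1 with hc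
  set μ := m - d - 1 with hμ
  have hcv : c + 2*d + 1 = m + n := by omega
  have hμv : μ + d + 1 = m := by omega
  have hcμ : μ + (n - d) = c := by omega
  rw [colP_eval]
  by_cases h1 : ((μ:ℤ) + (j:ℕ) - (i:ℕ)) < 0
  · -- negative: both sides zero
    rw [binomQ, if_neg (by omega), mul_zero]
    have hmem : (i:ℕ) - μ ∈ Finset.Ico ((j:ℕ)+1) d := by
      rw [Finset.mem_Ico]
      omega
    rw [Finset.prod_eq_zero hmem (by
      have : μ ≤ (i:ℕ) := by omega
      push_cast [this]
      ring), zero_mul]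
  · push_neg at h1
    by_cases h2 : (c:ℤ) < (μ:ℤ) + (j:ℕ) - (i:ℕ)
    · -- too large: both sides zero
      rw [binomQ, if_pos h1]
      have htn : ((μ:ℤ) + (j:ℕ) - (i:ℕ)).toNat = μ + (j:ℕ) - (i:ℕ) := by omega
      rw [htn, Nat.choose_eq_zero_of_lt (by omega), Nat.cast_zero, mul_zero]
      have hmem : c - μ + (i:ℕ) ∈ Finset.range (j:ℕ) := by
        rw [Finset.mem_range]
        omega
      rw [Finset.prod_eq_zero hmem (by
        have h3 : μ ≤ c := by omega
        push_cast [Nat.cast_sub h3]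
        ring), mul_zero]
    · -- main case
      push_neg at h2
      rw [binomQ, if_pos h1]
      have hiμj : (i:ℕ) ≤ μ + (j:ℕ) := by omega
      set a1 := μ + (j:ℕ) - (i:ℕ) with ha1
      have htn : ((μ:ℤ) + (j:ℕ) - (i:ℕ)).toNat = a1 := by omega
      rw [htn]
      have ha1c : a1 ≤ c := by omega
      set a2 := c - a1 with ha2
      have e3 : (∏ s ∈ Finset.Ico ((j:ℕ)+1) d, (((μ:ℕ):ℚ) + (s:ℚ) - (((i:ℕ):ℚ))))
          = ∏ s ∈ range (d - 1 - (j:ℕ)), ((a1:ℚ) + 1 + (s:ℚ)) := by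
        rw [Finset.prod_Ico_eq_prod_range,
          show d - ((j:ℕ)+1) = d - 1 - (j:ℕ) from by omega]
        refine Finset.prod_congr rfl fun s hs => ?_
        have h5 : μ + ((j:ℕ)+1+s) = a1 + 1 + s + (i:ℕ) := by omega
        have h6 := congrArg (Nat.cast : ℕ → ℚ) h5
        push_cast at h6
        push_cast
        linarith
      have e4 : (∏ s ∈ Finset.range (j:ℕ), ((((i:ℕ):ℚ)) + (((c:ℕ):ℚ) - ((μ:ℕ):ℚ) - (s:ℚ))))
          = ∏ s ∈ range (j:ℕ), ((a2:ℚ) + 1 + (s:ℚ)) := by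
        rw [← Finset.prod_range_reflect (fun s => (((i:ℕ):ℚ)) + (((c:ℕ):ℚ) - ((μ:ℕ):ℚ) - (s:ℚ))) (j:ℕ)]
        refine Finset.prod_congr rfl fun s hs => ?_
        rw [Finset.mem_range] at hs
        have h5 : (a2 + 1 + s) + (μ + ((j:ℕ) - 1 - s)) = (i:ℕ) + c := by omega
        have h6 := congrArg (Nat.cast : ℕ → ℚ) h5
        push_cast at h6
        push_cast
        linarith
      rw [e3, e4, Nat.cast_choose ℚ ha1c]
      have e1 : ((m - (i:ℕ) - 2).factorial : ℚ)
          = (a1.factorial:ℚ) * ∏ s ∈ range (d-1-(j:ℕ)), ((a1:ℚ)+1+(s:ℚ)) := by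
        rw [show m - (i:ℕ) - 2 = a1 + (d-1-(j:ℕ)) from by omega, fact_ratio]
      have e2 : ((n - d + (i:ℕ)).factorial : ℚ)
          = (a2.factorial:ℚ) * ∏ s ∈ range (j:ℕ), ((a2:ℚ)+1+(s:ℚ)) := by
        rw [show n - d + (i:ℕ) = a2 + (j:ℕ) from by omega, fact_ratio]
      rw [e1, e2, show c - a1 = a2 from rfl]
      have f1 : (a1.factorial:ℚ) ≠ 0 := Nat.cast_ne_zero.mpr (Nat.factorial_ne_zero _)
      have f2 : (a2.factorial:ℚ) ≠ 0 := Nat.cast_ne_zero.mpr (Nat.factorial_ne_zero _)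
      have f3 : (c.factorial:ℚ) ≠ 0 := Nat.cast_ne_zero.mpr (Nat.factorial_ne_zero _)
      field_simp

end Main

theorem hankel_submatrix_invertible (m n d : ℕ) (hd : 0 < d) (hdm : d < m) (hdn : d < n) :
    IsUnit (Matrix.of fun i j : Fin d =>
        binomQ (m + n - 2 * d - 1) ((m : ℤ) - ((i : ℕ) + 1) - ((j : ℕ) + 1))) ∧
      (Matrix.of fun i j : Fin d =>
          binomQ (m + n - 2 * d - 1) ((m : ℤ) - ((i : ℕ) + 1) - ((j : ℕ) + 1))).det =
        (-1) ^ (d * (d - 1) / 2) *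
          ∏ i ∈ Finset.range d,
            ((i.factorial : ℚ) * ((m + n - 2 * d - 1 + i).factorial : ℚ)) /
              (((m - i - 2).factorial : ℚ) * ((n - i - 1).factorial : ℚ)) ∧
      ((-1 : ℚ) ^ (d * (d - 1) / 2) *
          ∏ i ∈ Finset.range d,
            ((i.factorial : ℚ) * ((m + n - 2 * d - 1 + i).factorial : ℚ)) /
              (((m - i - 2).factorial : ℚ) * ((n - i - 1).factorial : ℚ))) ≠ 0 := by
  set c := m + n - 2 * d - 1 with hc
  set μ := m - d - 1 with hμ
  set M : Matrix (Fin d) (Fin d) ℚ := Matrix.of fun i j : Fin d =>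
    binomQ c ((m : ℤ) - ((i : ℕ) + 1) - ((j : ℕ) + 1)) with hM
  set T : Matrix (Fin d) (Fin d) ℚ := M.submatrix id Fin.revPerm with hT
  set P : ℚ := ∏ i ∈ Finset.range d,
      ((i.factorial : ℚ) * ((c + i).factorial : ℚ)) /
        (((m - i - 2).factorial : ℚ) * ((n - i - 1).factorial : ℚ)) with hP
  set e := d * (d - 1) / 2 with he
  -- sign relation
  have hsign : T.det = (-1:ℚ)^e * M.det := by
    rw [hT, Matrix.det_permute' Fin.revPerm M, sign_revPerm]
    norm_num
    exact Or.inl rfl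
  -- entries of T
  have hTentry : ∀ i j : Fin d, T i j = binomQ c ((μ:ℤ) + (j:ℕ) - (i:ℕ)) := by
    intro i j
    rw [hT]
    simp only [Matrix.submatrix_apply, id_eq, hM, Matrix.of_apply, Fin.revPerm_apply]
    congr 1
    have hrev : ((Fin.rev j : Fin d) : ℕ) = d - ((j:ℕ) + 1) := Fin.val_rev j
    rw [hrev]
    have hj := j.isLt
    omega
  -- scaling factors
  set r : Fin d → ℚ := fun i =>
    ((m - (i:ℕ) - 2).factorial : ℚ) * ((n - d + (i:ℕ)).factorial : ℚ) / ((c).factorial : ℚ)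
    with hr
  have hrval : ∀ i : Fin d, r i ≠ 0 := by
    intro i
    rw [hr]
    have := Nat.factorial_pos (m - (i:ℕ) - 2)
    have := Nat.factorial_pos (n - d + (i:ℕ))
    have := Nat.factorial_pos c
    positivity
  have hEeq : (Matrix.of fun i j : Fin d =>
      (colP d ((c:ℕ):ℚ) ((μ:ℕ):ℚ) ((j:ℕ))).eval (((i:ℕ):ℚ)))
      = Matrix.of fun i j : Fin d => r i * T i j := by
    ext i j
    simp only [Matrix.of_apply]
    rw [hTentry i j, hr]
    exact (entry_identity m n d hd hdm hdn i j).symm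
  have hdetscale : (∏ i : Fin d, r i) * T.det
      = (∏ k ∈ range d, (k.factorial : ℚ)) * ∏ k ∈ range d, (((c:ℕ):ℚ) + k + 1)^(d - 1 - k) := by
    rw [← Matrix.det_mul_column r T, ← hEeq, detE]
  -- product identities
  have hS4 : (∏ i ∈ range d, ((n - d + i).factorial : ℚ))
      = ∏ i ∈ range d, ((n - i - 1).factorial : ℚ) := by
    rw [← Finset.prod_range_reflect (fun i => ((n - d + i).factorial : ℚ)) d]
    refine Finset.prod_congr rfl fun i hi => ?_
    rw [Finset.mem_range] at hi
    congr 2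
    omega
  have hW : (∏ i ∈ range d, (((c + i).factorial : ℚ)))
      = ((c.factorial:ℚ))^d * ∏ k ∈ range d, (((c:ℕ):ℚ) + k + 1)^(d - 1 - k) := by
    have h1 : ∀ i ∈ range d, (((c + i).factorial : ℚ))
        = (c.factorial:ℚ) * ∏ s ∈ range i, (((c:ℕ):ℚ) + 1 + s) := fun i _ => fact_ratio c i
    rw [Finset.prod_congr rfl h1, Finset.prod_mul_distrib, Finset.prod_const,
      Finset.card_range, prod_tri d (fun s => ((c:ℕ):ℚ) + 1 + s)]
    congr 1
    refine Finset.prod_congr rfl fun k _ => ?_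
    congr 1
    ring
  have hrprod : (∏ i : Fin d, r i)
      = (∏ i ∈ range d, ((m - i - 2).factorial : ℚ))
        * (∏ i ∈ range d, ((n - d + i).factorial : ℚ)) / ((c.factorial:ℚ))^d := by
    have h0 : (∏ i : Fin d, r i) = ∏ i ∈ range d,
        (((m - i - 2).factorial : ℚ) * ((n - d + i).factorial : ℚ) / ((c).factorial : ℚ)) :=
      Fin.prod_univ_eq_prod_range
        (fun i => ((m - i - 2).factorial : ℚ) * ((n - d + i).factorial : ℚ) / ((c).factorial : ℚ)) d
    rw [h0, Finset.prod_div_distrib, Finset.prod_mul_distrib, Finset.prod_const, Finset.card_range]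
  have hF1 : (∏ i ∈ range d, ((m - i - 2).factorial : ℚ)) ≠ 0 :=
    Finset.prod_ne_zero_iff.mpr fun i _ => Nat.cast_ne_zero.mpr (Nat.factorial_ne_zero _)
  have hF3 : (∏ i ∈ range d, ((n - i - 1).factorial : ℚ)) ≠ 0 :=
    Finset.prod_ne_zero_iff.mpr fun i _ => Nat.cast_ne_zero.mpr (Nat.factorial_ne_zero _)
  have hK : ((c.factorial:ℚ)) ≠ 0 := Nat.cast_ne_zero.mpr (Nat.factorial_ne_zero _)
  have hPalt : P = (∏ i ∈ range d, (i.factorial : ℚ))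
      * (∏ i ∈ range d, (((c + i).factorial : ℚ)))
      / ((∏ i ∈ range d, ((m - i - 2).factorial : ℚ))
        * (∏ i ∈ range d, ((n - i - 1).factorial : ℚ))) := by
    rw [hP, Finset.prod_div_distrib, Finset.prod_mul_distrib, Finset.prod_mul_distrib]
  have hVP : (∏ k ∈ range d, (k.factorial : ℚ)) * ∏ k ∈ range d, (((c:ℕ):ℚ) + k + 1)^(d - 1 - k)
      = (∏ i : Fin d, r i) * P := by
    rw [hrprod, hPalt, hS4, hW]
    field_simp
  have hrne : (∏ i : Fin d, r i) ≠ 0 := Finset.prod_ne_zero_iff.mpr fun i _ => hrval i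
  have hdetT : T.det = P := by
    apply mul_left_cancel₀ hrne
    rw [hdetscale, hVP]
  have hMdet : M.det = (-1:ℚ)^e * P := by
    have h2 : (-1:ℚ)^e * ((-1:ℚ)^e * M.det) = M.det := by
      rw [← mul_assoc, ← pow_add]
      rw [Even.neg_one_pow ⟨e, rfl⟩, one_mul]
    rw [← h2, ← hsign, hdetT]
  have hPpos : 0 < P := by
    rw [hP]
    refine Finset.prod_pos fun i _ => ?_
    have h1 := Nat.factorial_pos i
    have h2 := Nat.factorial_pos (c + i)
    have h3 := Nat.factorial_pos (m - i - 2)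
    have h4 := Nat.factorial_pos (n - i - 1)
    positivity
  have hne : (-1:ℚ)^e * P ≠ 0 :=
    mul_ne_zero (pow_ne_zero _ (by norm_num)) (ne_of_gt hPpos)
  refine ⟨?_, by rw [hMdet], hne⟩
  rw [Matrix.isUnit_iff_isUnit_det, isUnit_iff_ne_zero, hMdet]
  exact hne
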